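/- arXiv:2310.18186 — 3 statements merged into one kernel-verified Lean document; each statement's English description precedes it below -/
import Mathlib

section
/- Let X_1, ..., X_n be centered real random variables (not necessarily independent), each satisfying the sub-exponential tail bound P(|X_ℓ| ≥ t) ≤ 2·exp(-t²/(2σ² + 2bt)) for all t > 0. Then for any p ≥ 2, E[max_{ℓ∈[n]} |X_ℓ|^p] ≤ max{√(8σ² log n), 8b log n}^p + e·(2σ)^p·p^{p/2} + 2e·(8b)^p·p^p. -/
open MeasureTheory Real Set

-- Laplace-type bound
lemma gamma_laplace {q : ℝ} (hq : 0 < q) :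
    Real.Gamma (q + 1) ≤ 2 * ((2 / Real.exp 1) ^ q * q ^ q) := by
  have h2q : (0:ℝ) < 2 * q := by linarith
  have h1 : Real.Gamma (q + 1) = ∫ x in Ioi (0:ℝ), Real.exp (-x) * x ^ q := by
    rw [Real.Gamma_eq_integral (by linarith)]
    simp
  have key : ∀ x ∈ Ioi (0:ℝ),
      Real.exp (-x) * x ^ q ≤ (2 / Real.exp 1) ^ q * q ^ q * Real.exp (-(1/2) * x) := by
    intro x hx
    have hx0 : (0:ℝ) < x := hx
    have hlog : Real.log x ≤ Real.log (2*q) + x / (2*q) - 1 := by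
      have h := Real.log_le_sub_one_of_pos (show (0:ℝ) < x / (2*q) by positivity)
      rw [Real.log_div hx0.ne' h2q.ne'] at h
      linarith
    have hexp : q * Real.log x - x ≤ q * (Real.log (2*q) - 1) - (1/2) * x := by
      have := mul_le_mul_of_nonneg_left hlog hq.le
      have hq2 : q * (x / (2*q)) = x / 2 := by field_simp
      nlinarith [this]
    have lhs_eq : Real.exp (-x) * x ^ q = Real.exp (q * Real.log x - x) := by
      rw [Real.rpow_def_of_pos hx0, ← Real.exp_add]
      congr 1; ring
    have rhs_eq : (2 / Real.exp 1) ^ q * q ^ q * Real.exp (-(1/2) * x)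
        = Real.exp (q * (Real.log (2*q) - 1) - (1/2) * x) := by
      rw [← Real.mul_rpow (by positivity) hq.le]
      have : 2 / Real.exp 1 * q = (2*q) / Real.exp 1 := by ring
      rw [this, Real.rpow_def_of_pos (by positivity), Real.log_div h2q.ne' (Real.exp_pos 1).ne',
        Real.log_exp, ← Real.exp_add]
      congr 1; ring
    rw [lhs_eq, rhs_eq]
    exact Real.exp_le_exp.mpr (by linarith)
  have hint1 : IntegrableOn (fun x => Real.exp (-x) * x ^ q) (Ioi (0:ℝ)) := by
    have := Real.GammaIntegral_convergent (show (0:ℝ) < q + 1 by linarith)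
    simpa using this
  have hint2 : IntegrableOn (fun x => (2 / Real.exp 1) ^ q * q ^ q * Real.exp (-(1/2) * x))
      (Ioi (0:ℝ)) := by
    exact (exp_neg_integrableOn_Ioi 0 (by norm_num : (0:ℝ) < 1/2)).const_mul _
  calc Real.Gamma (q+1) = ∫ x in Ioi (0:ℝ), Real.exp (-x) * x ^ q := h1
    _ ≤ ∫ x in Ioi (0:ℝ), (2 / Real.exp 1) ^ q * q ^ q * Real.exp (-(1/2) * x) :=
        setIntegral_mono_on hint1 hint2 measurableSet_Ioi key
    _ = (2 / Real.exp 1) ^ q * q ^ q * ∫ x in Ioi (0:ℝ), Real.exp (-(1/2) * x) := by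
        rw [integral_const_mul]
    _ = 2 * ((2 / Real.exp 1) ^ q * q ^ q) := by
        have : ∫ x in Ioi (0:ℝ), Real.exp (-(1/2) * x) = 2 := by
          have h := integral_exp_neg_mul_rpow (by norm_num : (0:ℝ) < 1) (by norm_num : (0:ℝ) < 1/2)
          simp only [Real.rpow_one] at h
          rw [h]
          norm_num [Real.Gamma_two, Real.rpow_neg_one]
        rw [this]; ring

lemma gamma_interp {q : ℝ} (h1 : 1 ≤ q) (h2 : q ≤ 2) :
    Real.Gamma (q + 1) ≤ (2:ℝ) ^ (q - 1) := by
  have hc := Real.convexOn_log_Gamma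
  have key := hc.2 (show (2:ℝ) ∈ Ioi (0:ℝ) by norm_num) (show (3:ℝ) ∈ Ioi (0:ℝ) by norm_num)
    (show (0:ℝ) ≤ 2 - q by linarith) (show (0:ℝ) ≤ q - 1 by linarith)
    (show (2 - q) + (q - 1) = 1 by ring)
  have hpt : (2 - q) • (2:ℝ) + (q - 1) • (3:ℝ) = q + 1 := by
    simp only [smul_eq_mul]; ring
  rw [hpt] at key
  simp only [Function.comp_apply, smul_eq_mul] at key
  have hG2 : Real.Gamma 2 = 1 := Real.Gamma_two
  have hG3 : Real.Gamma 3 = 2 := by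
    have : (3:ℝ) = 2 + 1 := by norm_num
    rw [this, Real.Gamma_add_one (by norm_num), hG2]; norm_num
  rw [hG2, hG3, Real.log_one] at key
  have hGpos : 0 < Real.Gamma (q + 1) := Real.Gamma_pos_of_pos (by linarith)
  calc Real.Gamma (q+1) = Real.exp (Real.log (Real.Gamma (q+1))) := (Real.exp_log hGpos).symm
    _ ≤ Real.exp ((q - 1) * Real.log 2) := Real.exp_le_exp.mpr (by linarith)
    _ = (2:ℝ) ^ (q - 1) := by
        rw [Real.rpow_def_of_pos (by norm_num)]; ring_nf

lemma two_gamma_le {q : ℝ} (hq : 1 ≤ q) : 2 * Real.Gamma (q + 1) ≤ Real.exp 1 * q ^ q := by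
  have hq0 : (0:ℝ) < q := by linarith
  have he : (2.7182818283 : ℝ) < Real.exp 1 := Real.exp_one_gt_d9
  rcases le_or_gt q 2 with h2 | h2
  · have key := gamma_interp hq h2
    have h2q : 2 * Real.Gamma (q + 1) ≤ (2:ℝ) ^ q := by
      have h : (2:ℝ) ^ q = (2:ℝ) ^ (q - 1) * 2 := by
        rw [← Real.rpow_add_one (two_ne_zero) (q - 1)]; norm_num
      nlinarith [key]
    refine h2q.trans ?_
    -- 2^q ≤ e * q^q  ⟺  q log 2 ≤ 1 + q log q
    have hlogq : 1 - 1/q ≤ Real.log q := by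
      have h := Real.log_le_sub_one_of_pos (show (0:ℝ) < 1/q by positivity)
      rw [Real.log_div one_ne_zero hq0.ne', Real.log_one] at h
      linarith
    have hexp : q * Real.log 2 ≤ 1 + q * Real.log q := by
      have hl2 : Real.log 2 < 0.6931471808 := Real.log_two_lt_d9
      have hmul := mul_le_mul_of_nonneg_left hlogq hq0.le
      have hq1 : q * (1/q) = 1 := by field_simp
      nlinarith [hmul]
    calc (2:ℝ) ^ q = Real.exp (q * Real.log 2) := by
          rw [Real.rpow_def_of_pos (by norm_num)]; ring_nf
      _ ≤ Real.exp (1 + q * Real.log q) := Real.exp_le_exp.mpr hexp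
      _ = Real.exp 1 * q ^ q := by
          rw [Real.exp_add, Real.rpow_def_of_pos hq0]; ring_nf
  · have key := gamma_laplace hq0
    have hbase : (2:ℝ) / Real.exp 1 ≤ 1 := by
      rw [div_le_one (Real.exp_pos 1)]; linarith
    have hmono : (2 / Real.exp 1 : ℝ) ^ q ≤ (2 / Real.exp 1) ^ (2:ℝ) :=
      Real.rpow_le_rpow_of_exponent_ge (by positivity) hbase h2.le
    have hval : (2 / Real.exp 1 : ℝ) ^ (2:ℝ) = 4 / (Real.exp 1)^2 := by
      rw [show (2:ℝ) = ((2:ℕ):ℝ) by norm_num, Real.rpow_natCast]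
      rw [div_pow]; norm_num
    have h16 : 4 * ((2 / Real.exp 1 : ℝ) ^ q) ≤ Real.exp 1 := by
      rw [hval] at hmono
      have : (0:ℝ) < (Real.exp 1)^2 := by positivity
      rw [le_div_iff₀ this] at hmono
      have hxpos : (0:ℝ) < (2 / Real.exp 1 : ℝ) ^ q :=
        Real.rpow_pos_of_pos (by positivity) q
      nlinarith
    have hqq : (0:ℝ) < q ^ q := Real.rpow_pos_of_pos hq0 q
    nlinarith [key, mul_le_mul_of_nonneg_right h16 hqq.le,
      mul_pos (Real.rpow_pos_of_pos (show (0:ℝ) < 2/Real.exp 1 by positivity) q) hqq]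

lemma keyTail {σ b t : ℝ} (hσ : 0 < σ) (hb : 0 < b) (n : ℕ) (hn : 0 < n) (ht : 0 < t)
    (h1 : Real.sqrt (8*σ^2*Real.log n) ≤ t) (h2 : 8*b*Real.log n ≤ t) :
    (n:ℝ) * (2 * Real.exp (-(t^2) / (2*σ^2 + 2*b*t))) ≤
      2 * (Real.exp (-(1/(8*σ^2)) * t^(2:ℝ))) + 2 * (Real.exp (-(1/(8*b)) * t^(1:ℝ))) := by
  have hr2 : t ^ (2:ℝ) = t ^ 2 := by
    rw [show (2:ℝ) = ((2:ℕ):ℝ) by norm_num, Real.rpow_natCast]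
  rw [hr2, Real.rpow_one]
  have hn1 : (1:ℝ) ≤ (n:ℝ) := by exact_mod_cast hn
  have hlogn : 0 ≤ Real.log n := Real.log_nonneg hn1
  have hsq : 8*σ^2*Real.log n ≤ t^2 := by
    have hs := Real.sq_sqrt (show (0:ℝ) ≤ 8*σ^2*Real.log n by positivity)
    nlinarith [Real.sqrt_nonneg (8*σ^2*Real.log n)]
  have hnpos : (0:ℝ) < (n:ℝ) := by linarith
  have hnle1 : (n:ℝ) ≤ Real.exp (t^2/(8*σ^2)) := by
    rw [← Real.exp_log hnpos]
    apply Real.exp_le_exp.mpr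
    rw [le_div_iff₀ (show (0:ℝ) < 8*σ^2 by positivity)]
    nlinarith
  have hnle2 : (n:ℝ) ≤ Real.exp (t/(8*b)) := by
    rw [← Real.exp_log hnpos]
    apply Real.exp_le_exp.mpr
    rw [le_div_iff₀ (show (0:ℝ) < 8*b by positivity)]
    nlinarith
  have hden : (0:ℝ) < 2*σ^2 + 2*b*t := by positivity
  have hpos2 : (0:ℝ) < Real.exp (-(1/(8*b)) * t) := Real.exp_pos _
  have hpos1 : (0:ℝ) < Real.exp (-(1/(8*σ^2)) * t^2) := Real.exp_pos _
  rcases le_total (b*t) (σ^2) with hc | hc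
  · -- Gaussian regime
    have hd4 : 2*σ^2 + 2*b*t ≤ 4*σ^2 := by nlinarith
    have e1 : Real.exp (-(t^2) / (2*σ^2+2*b*t)) ≤ Real.exp (-(t^2) / (4*σ^2)) := by
      apply Real.exp_le_exp.mpr
      rw [neg_div, neg_div, neg_le_neg_iff]
      exact div_le_div_of_nonneg_left (by positivity) hden hd4
    have e2 : (n:ℝ) * Real.exp (-(t^2) / (4*σ^2)) ≤ Real.exp (-(1/(8*σ^2)) * t^2) := by
      calc (n:ℝ) * Real.exp (-(t^2) / (4*σ^2))
          ≤ Real.exp (t^2/(8*σ^2)) * Real.exp (-(t^2) / (4*σ^2)) :=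
            mul_le_mul_of_nonneg_right hnle1 (Real.exp_pos _).le
        _ = Real.exp (t^2/(8*σ^2) + -(t^2) / (4*σ^2)) := (Real.exp_add _ _).symm
        _ = Real.exp (-(1/(8*σ^2)) * t^2) := by
            congr 1; field_simp; ring
    have := mul_le_mul_of_nonneg_left e1 hnpos.le
    nlinarith
  · -- exponential regime
    have hd4 : 2*σ^2 + 2*b*t ≤ 4*(b*t) := by nlinarith
    have e1 : Real.exp (-(t^2) / (2*σ^2+2*b*t)) ≤ Real.exp (-(t / (4*b))) := by
      apply Real.exp_le_exp.mpr
      rw [neg_div, neg_le_neg_iff]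
      have heq : t / (4*b) = t^2 / (4*(b*t)) := by
        field_simp
      rw [heq]
      exact div_le_div_of_nonneg_left (by positivity) hden hd4
    have e2 : (n:ℝ) * Real.exp (-(t / (4*b))) ≤ Real.exp (-(1/(8*b)) * t) := by
      calc (n:ℝ) * Real.exp (-(t / (4*b)))
          ≤ Real.exp (t/(8*b)) * Real.exp (-(t / (4*b))) :=
            mul_le_mul_of_nonneg_right hnle2 (Real.exp_pos _).le
        _ = Real.exp (t/(8*b) + -(t / (4*b))) := (Real.exp_add _ _).symm
        _ = Real.exp (-(1/(8*b)) * t) := by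
            congr 1; field_simp; ring
    have := mul_le_mul_of_nonneg_left e1 hnpos.le
    nlinarith

/-- Maximal moment bound for (σ², b)-sub-exponential random variables: if
`X_1, …, X_n` are centered, each satisfying
`P(|X_ℓ| ≥ t) ≤ 2·exp(-t²/(2σ² + 2bt))` for all `t > 0`, then for any `p ≥ 2`,
`E[max_ℓ |X_ℓ|^p] ≤ max{√(8σ² log n), 8b log n}^p + e·(2σ)^p·p^{p/2} + 2e·(8b)^p·p^p`. -/
theorem max_subexponential_moment_bound
    {Ω : Type*} [MeasurableSpace Ω] (P : Measure Ω) [IsProbabilityMeasure P]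
    (n : ℕ) (hn : 0 < n) (X : Fin n → Ω → ℝ) (hmeas : ∀ ℓ, Measurable (X ℓ))
    (σ b : ℝ) (hσ : 0 < σ) (hb : 0 < b)
    (hcentered : ∀ ℓ, ∫ ω, X ℓ ω ∂P = 0)
    (htail : ∀ ℓ, ∀ t : ℝ, 0 < t →
      (P {ω | t ≤ |X ℓ ω|}).toReal ≤ 2 * Real.exp (-(t ^ 2) / (2 * σ ^ 2 + 2 * b * t)))
    (p : ℝ) (hp : 2 ≤ p) :
    (∫ ω, ⨆ ℓ : Fin n, |X ℓ ω| ^ p ∂P) ≤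
      (max (Real.sqrt (8 * σ ^ 2 * Real.log n)) (8 * b * Real.log n)) ^ p +
        Real.exp 1 * (2 * σ) ^ p * p ^ (p / 2) + 2 * Real.exp 1 * (8 * b) ^ p * p ^ p := by
  haveI : Nonempty (Fin n) := Fin.pos_iff_nonempty.mp hn
  have hp0 : (0:ℝ) < p := by linarith
  set M : ℝ := max (Real.sqrt (8 * σ ^ 2 * Real.log n)) (8 * b * Real.log n) with hMdef
  have hM0 : 0 ≤ M := le_trans (Real.sqrt_nonneg _) (le_max_left _ _)
  set f : Ω → ℝ := fun ω => ⨆ ℓ, |X ℓ ω| with hfdef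
  have hbdd : ∀ ω, BddAbove (Set.range fun ℓ => |X ℓ ω|) :=
    fun ω => Set.Finite.bddAbove (Set.finite_range _)
  have hf_nn : ∀ ω, 0 ≤ f ω :=
    fun ω => le_trans (abs_nonneg _) (le_ciSup (hbdd ω) ⟨0, hn⟩)
  have hf_sup' : ∀ ω, f ω = Finset.univ.sup' Finset.univ_nonempty (fun ℓ => |X ℓ ω|) :=
    fun ω => (Finset.sup'_univ_eq_ciSup _).symm
  have hf_meas : Measurable f := by
    have h := Finset.measurable_sup' (Finset.univ_nonempty (α := Fin n))
      (f := fun ℓ (ω : Ω) => |X ℓ ω|) (fun ℓ _ => (hmeas ℓ).abs)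
    convert h using 1
    funext ω
    rw [hf_sup' ω, Finset.sup'_apply]
  have hattain : ∀ ω, ∃ ℓ0 : Fin n, f ω = |X ℓ0 ω| := by
    intro ω
    obtain ⟨ℓ0, _, hℓ0⟩ := Finset.exists_mem_eq_sup' (Finset.univ_nonempty (α := Fin n))
      (fun ℓ => |X ℓ ω|)
    exact ⟨ℓ0, (hf_sup' ω).trans hℓ0⟩
  have hSeq : ∀ ω, (⨆ ℓ, |X ℓ ω| ^ p) = f ω ^ p := by
    intro ω
    apply le_antisymm
    · apply ciSup_le
      intro ℓ
      exact Real.rpow_le_rpow (abs_nonneg _) (le_ciSup (hbdd ω) ℓ) hp0.le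
    · obtain ⟨ℓ0, hℓ0⟩ := hattain ω
      rw [hℓ0]
      exact le_ciSup (f := fun ℓ : Fin n => |X ℓ ω| ^ p)
        (Set.Finite.bddAbove (Set.finite_range _)) ℓ0
  -- the main lintegral bound
  set RHS : ℝ := M ^ p + Real.exp 1 * (2 * σ) ^ p * p ^ (p / 2) +
    2 * Real.exp 1 * (8 * b) ^ p * p ^ p with hRHSdef
  have hRHS_nn : 0 ≤ RHS := by
    have : (0:ℝ) ≤ M ^ p := Real.rpow_nonneg hM0 p
    have h2 : (0:ℝ) < Real.exp 1 * (2 * σ) ^ p * p ^ (p / 2) := by positivity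
    have h3 : (0:ℝ) < 2 * Real.exp 1 * (8 * b) ^ p * p ^ p := by positivity
    rw [hRHSdef]; linarith
  have key : (∫⁻ ω, ENNReal.ofReal (f ω ^ p) ∂P) ≤ ENNReal.ofReal RHS := by
    rw [lintegral_rpow_eq_lintegral_meas_le_mul P (ae_of_all _ hf_nn)
      hf_meas.aemeasurable hp0]
    have hsplit : (Ioi (0:ℝ)) = Ioc 0 M ∪ Ioi M := (Ioc_union_Ioi_eq_Ioi hM0).symm
    rw [hsplit, lintegral_union measurableSet_Ioi Ioc_disjoint_Ioi_same]
    have partA : (∫⁻ t in Ioc (0:ℝ) M, P {a | t ≤ f a} * ENNReal.ofReal (t ^ (p-1)))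
        ≤ ENNReal.ofReal (M ^ p / p) := by
      have hInt : IntegrableOn (fun t : ℝ => t ^ (p-1)) (Ioc 0 M) := by
        rw [← intervalIntegrable_iff_integrableOn_Ioc_of_le hM0]
        exact intervalIntegral.intervalIntegrable_rpow' (by linarith)
      have hnn : 0 ≤ᵐ[volume.restrict (Ioc (0:ℝ) M)] fun t : ℝ => t ^ (p-1) := by
        filter_upwards [ae_restrict_mem measurableSet_Ioc] with t ht
        exact Real.rpow_nonneg ht.1.le _
      calc (∫⁻ t in Ioc (0:ℝ) M, P {a | t ≤ f a} * ENNReal.ofReal (t ^ (p-1)))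
          ≤ ∫⁻ t in Ioc (0:ℝ) M, ENNReal.ofReal (t ^ (p-1)) := by
            apply lintegral_mono
            intro t
            calc P {a | t ≤ f a} * ENNReal.ofReal (t ^ (p-1))
                ≤ 1 * ENNReal.ofReal (t ^ (p-1)) := mul_le_mul_left prob_le_one _
              _ = ENNReal.ofReal (t ^ (p-1)) := one_mul _
        _ = ENNReal.ofReal (∫ t in Ioc (0:ℝ) M, t ^ (p-1)) :=
            (ofReal_integral_eq_lintegral_ofReal hInt hnn).symm
        _ ≤ ENNReal.ofReal (M ^ p / p) := by
            apply ENNReal.ofReal_le_ofReal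
            rw [← intervalIntegral.integral_of_le hM0,
              integral_rpow (Or.inl (by linarith : (-1:ℝ) < p - 1))]
            rw [show p - 1 + 1 = p by ring, Real.zero_rpow hp0.ne']
            simp
    set C : ℝ := (8*σ^2) ^ (p/2) * (1/2) * Real.Gamma (p/2) + (8*b) ^ p * Real.Gamma p
      with hCdef
    have partB : (∫⁻ t in Ioi M, P {a | t ≤ f a} * ENNReal.ofReal (t ^ (p-1)))
        ≤ ENNReal.ofReal (2 * C) := by
      set g1 : ℝ → ℝ := fun t => t ^ (p-1) * Real.exp (-(1/(8*σ^2)) * t ^ (2:ℝ)) with hg1def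
      set g2 : ℝ → ℝ := fun t => t ^ (p-1) * Real.exp (-(1/(8*b)) * t ^ (1:ℝ)) with hg2def
      have hint1 : IntegrableOn g1 (Ioi (0:ℝ)) :=
        integrableOn_rpow_mul_exp_neg_mul_rpow (by linarith) two_pos (by positivity)
      have hint2 : IntegrableOn g2 (Ioi (0:ℝ)) :=
        integrableOn_rpow_mul_exp_neg_mul_rpow (by linarith) one_pos (by positivity)
      have hIntSum : IntegrableOn (fun t => 2 * g1 t + 2 * g2 t) (Ioi (0:ℝ)) :=
        (hint1.const_mul 2).add (hint2.const_mul 2)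
      have pointwise : ∀ t ∈ Ioi M, P {a | t ≤ f a} * ENNReal.ofReal (t ^ (p-1))
          ≤ ENNReal.ofReal (2 * g1 t + 2 * g2 t) := by
        intro t ht
        have ht0 : (0:ℝ) < t := lt_of_le_of_lt hM0 ht
        have hP : P {a | t ≤ f a} ≤
            ENNReal.ofReal ((n:ℝ) * (2 * Real.exp (-(t^2) / (2*σ^2 + 2*b*t)))) := by
          have hsub : {a | t ≤ f a} ⊆ ⋃ ℓ : Fin n, {a | t ≤ |X ℓ a|} := by
            intro a ha
            obtain ⟨ℓ0, h0⟩ := hattain a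
            have hle : t ≤ |X ℓ0 a| := by rw [← h0]; exact ha
            exact Set.mem_iUnion.2 ⟨ℓ0, hle⟩
          refine (measure_mono hsub).trans ?_
          refine (measure_iUnion_fintype_le P _).trans ?_
          have each : ∀ ℓ : Fin n, P {a | t ≤ |X ℓ a|}
              ≤ ENNReal.ofReal (2 * Real.exp (-(t^2) / (2*σ^2 + 2*b*t))) := by
            intro ℓ
            rw [← ENNReal.ofReal_toReal (measure_ne_top P _)]
            exact ENNReal.ofReal_le_ofReal (htail ℓ t ht0)
          calc ∑ ℓ : Fin n, P {a | t ≤ |X ℓ a|}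
              ≤ ∑ _ℓ : Fin n, ENNReal.ofReal (2 * Real.exp (-(t^2) / (2*σ^2 + 2*b*t))) :=
                Finset.sum_le_sum (fun ℓ _ => each ℓ)
            _ = (n : ENNReal) * ENNReal.ofReal (2 * Real.exp (-(t^2) / (2*σ^2 + 2*b*t))) := by
                rw [Finset.sum_const, Finset.card_univ, Fintype.card_fin, nsmul_eq_mul]
            _ = ENNReal.ofReal ((n:ℝ) * (2 * Real.exp (-(t^2) / (2*σ^2 + 2*b*t)))) := by
                rw [← ENNReal.ofReal_natCast n,
                  ← ENNReal.ofReal_mul (by positivity : (0:ℝ) ≤ (n:ℝ))]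
        calc P {a | t ≤ f a} * ENNReal.ofReal (t ^ (p-1))
            ≤ ENNReal.ofReal ((n:ℝ) * (2 * Real.exp (-(t^2) / (2*σ^2 + 2*b*t))))
                * ENNReal.ofReal (t ^ (p-1)) := mul_le_mul_left hP _
          _ = ENNReal.ofReal (((n:ℝ) * (2 * Real.exp (-(t^2) / (2*σ^2 + 2*b*t)))) * t ^ (p-1)) :=
              (ENNReal.ofReal_mul (by positivity)).symm
          _ ≤ ENNReal.ofReal (2 * g1 t + 2 * g2 t) := by
              apply ENNReal.ofReal_le_ofReal
              have hkey := keyTail hσ hb n hn ht0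
                (le_trans (le_max_left _ _) ht.le) (le_trans (le_max_right _ _) ht.le)
              have hmul := mul_le_mul_of_nonneg_right hkey (Real.rpow_nonneg ht0.le (p-1))
              calc ((n:ℝ) * (2 * Real.exp (-(t^2) / (2*σ^2 + 2*b*t)))) * t ^ (p-1)
                  ≤ (2 * (Real.exp (-(1/(8*σ^2)) * t^(2:ℝ)))
                      + 2 * (Real.exp (-(1/(8*b)) * t^(1:ℝ)))) * t ^ (p-1) := hmul
                _ = 2 * g1 t + 2 * g2 t := by rw [hg1def, hg2def]; ring
      have hnnSum : 0 ≤ᵐ[volume.restrict (Ioi (0:ℝ))] fun t => 2 * g1 t + 2 * g2 t := by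
        filter_upwards [ae_restrict_mem measurableSet_Ioi] with t ht
        have h1 : 0 ≤ g1 t := mul_nonneg (Real.rpow_nonneg (le_of_lt ht) _) (Real.exp_pos _).le
        have h2 : 0 ≤ g2 t := mul_nonneg (Real.rpow_nonneg (le_of_lt ht) _) (Real.exp_pos _).le
        exact add_nonneg (mul_nonneg (by norm_num) h1) (mul_nonneg (by norm_num) h2)
      calc (∫⁻ t in Ioi M, P {a | t ≤ f a} * ENNReal.ofReal (t ^ (p-1)))
          ≤ ∫⁻ t in Ioi M, ENNReal.ofReal (2 * g1 t + 2 * g2 t) :=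
            lintegral_mono_ae ((ae_restrict_iff' measurableSet_Ioi).mpr
              (Filter.Eventually.of_forall pointwise))
        _ ≤ ∫⁻ t in Ioi (0:ℝ), ENNReal.ofReal (2 * g1 t + 2 * g2 t) :=
            lintegral_mono_set (Ioi_subset_Ioi hM0)
        _ = ENNReal.ofReal (∫ t in Ioi (0:ℝ), (2 * g1 t + 2 * g2 t)) :=
            (ofReal_integral_eq_lintegral_ofReal hIntSum hnnSum).symm
        _ = ENNReal.ofReal (2 * C) := by
            congr 1
            rw [integral_add (hint1.const_mul 2) (hint2.const_mul 2),
              integral_const_mul, integral_const_mul, hg1def, hg2def]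
            rw [integral_rpow_mul_exp_neg_mul_rpow two_pos (by linarith) (by positivity),
              integral_rpow_mul_exp_neg_mul_rpow one_pos (by linarith) (by positivity)]
            rw [show p - 1 + 1 = p by ring]
            have hc1 : ((1:ℝ)/(8*σ^2)) ^ (-p/2) = (8*σ^2) ^ (p/2) := by
              rw [one_div, Real.inv_rpow (by positivity), neg_div,
                Real.rpow_neg (by positivity), inv_inv]
            have hc2 : ((1:ℝ)/(8*b)) ^ (-p/1) = (8*b) ^ p := by
              rw [one_div, Real.inv_rpow (by positivity), show -p/1 = -p by ring,
                Real.rpow_neg (by positivity), inv_inv]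
            rw [hc1, hc2, hCdef]
            rw [show p/1 = p by ring]
            ring
    calc ENNReal.ofReal p * ((∫⁻ t in Ioc (0:ℝ) M, P {a | t ≤ f a} * ENNReal.ofReal (t ^ (p-1)))
            + (∫⁻ t in Ioi M, P {a | t ≤ f a} * ENNReal.ofReal (t ^ (p-1))))
        ≤ ENNReal.ofReal p * (ENNReal.ofReal (M ^ p / p) + ENNReal.ofReal (2 * C)) := by
          exact mul_le_mul_right (add_le_add partA partB) _
      _ = ENNReal.ofReal (p * (M ^ p / p + 2 * C)) := by
          rw [← ENNReal.ofReal_add (div_nonneg (Real.rpow_nonneg hM0 p) hp0.le)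
            (by positivity), ← ENNReal.ofReal_mul hp0.le]
      _ ≤ ENNReal.ofReal RHS := by
          apply ENNReal.ofReal_le_ofReal
          rw [hRHSdef, hCdef]
          have hgam1 : p * Real.Gamma (p/2) = 2 * Real.Gamma (p/2 + 1) := by
            rw [Real.Gamma_add_one (by positivity : (p/2:ℝ) ≠ 0)]
            ring
          have hgam2 : p * Real.Gamma p = Real.Gamma (p + 1) := by
            rw [Real.Gamma_add_one hp0.ne']
          have b1 : 2 * Real.Gamma (p/2 + 1) ≤ Real.exp 1 * (p/2) ^ (p/2) :=
            two_gamma_le (by linarith)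
          have b2 : 2 * Real.Gamma (p + 1) ≤ Real.exp 1 * p ^ p :=
            two_gamma_le (by linarith)
          have heq : (8*σ^2) ^ (p/2) * (Real.exp 1 * (p/2) ^ (p/2))
              = Real.exp 1 * (2*σ) ^ p * p ^ (p/2) := by
            have e1 : (2*σ) ^ p = (4*σ^2) ^ (p/2) := by
              rw [show (4*σ^2 : ℝ) = (2*σ) ^ (2:ℕ) by ring, ← Real.rpow_natCast (2*σ) 2,
                ← Real.rpow_mul (by positivity)]
              congr 1
              ring
            have e2 : (8*σ^2 : ℝ) ^ (p/2) * (p/2) ^ (p/2) = (4*σ^2) ^ (p/2) * p ^ (p/2) := by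
              rw [← Real.mul_rpow (by positivity) (by positivity),
                ← Real.mul_rpow (by positivity) hp0.le]
              congr 1
              ring
            rw [e1]
            linear_combination Real.exp 1 * e2
          have key1 : (8*σ^2) ^ (p/2) * (p * Real.Gamma (p/2))
              ≤ Real.exp 1 * (2*σ) ^ p * p ^ (p/2) := by
            rw [hgam1, ← heq]
            exact mul_le_mul_of_nonneg_left b1 (Real.rpow_nonneg (by positivity) _)
          have key2 : 2 * (8*b) ^ p * (p * Real.Gamma p)
              ≤ 2 * Real.exp 1 * (8*b) ^ p * p ^ p := by
            rw [hgam2]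
            have hbp : (0:ℝ) ≤ (8*b) ^ p := Real.rpow_nonneg (by positivity) p
            have h := mul_le_mul_of_nonneg_left b2 hbp
            have hpos : (0:ℝ) ≤ (8*b) ^ p * (Real.exp 1 * p ^ p) := by positivity
            nlinarith [h, hpos]
          have hMp : p * (M ^ p / p) = M ^ p := by field_simp
          calc p * (M ^ p / p + 2 * ((8*σ^2) ^ (p/2) * (1/2) * Real.Gamma (p/2)
                  + (8*b) ^ p * Real.Gamma p))
              = M ^ p + (8*σ^2) ^ (p/2) * (p * Real.Gamma (p/2))
                  + 2 * (8*b) ^ p * (p * Real.Gamma p) := by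
                rw [mul_add, hMp]; ring
            _ ≤ M ^ p + Real.exp 1 * (2*σ) ^ p * p ^ (p/2)
                  + 2 * Real.exp 1 * (8*b) ^ p * p ^ p := by
                linarith [key1, key2]
  have hrw : (∫ ω, ⨆ ℓ, |X ℓ ω| ^ p ∂P) = ∫ ω, f ω ^ p ∂P :=
    integral_congr_ae (Filter.Eventually.of_forall hSeq)
  rw [hrw, integral_eq_lintegral_of_nonneg_ae
    (ae_of_all _ fun ω => Real.rpow_nonneg (hf_nn ω) p)
    (((Real.continuous_rpow_const hp0.le).measurable.comp hf_meas).aestronglyMeasurable)]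
  exact ENNReal.toReal_le_of_le_ofReal hRHS_nn key
end

section
/- Consider an episodic MDP of horizon H with rewards r_h that are L_r-Lipschitz on S × A, and transition kernels reparametrized by functions F_h(·, ξ_h) that are L_F-Lipschitz for almost all ξ_h. Then the optimal Q-functions Q*_h and value functions V*_h (defined by the optimal Bellman equations with Q*_{H+1} = V*_{H+1} = 0) are Lipschitz continuous with constant L_{V,h} ≤ Σ_{h'=h}^{H} L_F^{h'-h} · L_r, where V*_h is Lipschitz with respect to ρ_S and Q*_h with respect to the product metric ρ satisfying ρ((s,a),(s',a')) ≤ ρ_S(s,s') + ρ_A(a,a'). -/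
open MeasureTheory

/-- In an episodic MDP of horizon `H` whose rewards are `L_r`-Lipschitz and whose
transitions are reparametrized by functions `F_h(·, ξ)` that are `L_F`-Lipschitz for
almost every noise `ξ`, the optimal Q- and value functions (given by the optimal
Bellman equations with zero terminal value) are Lipschitz with constant
`L_{V,h} ≤ Σ_{h'=h}^H L_F^{h'-h}·L_r`. -/
theorem optimal_values_lipschitz_of_reparametrization
    {S A : Type*} [MetricSpace S] [MetricSpace A] [Nonempty A]
    [MeasurableSpace S] [BorelSpace S]
    {Ξ : Type*} [MeasurableSpace Ξ]
    (H : ℕ) (μ : ℕ → Measure Ξ) (hμ : ∀ h, IsProbabilityMeasure (μ h))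
    (F : ℕ → (S × A) → Ξ → S) (hFmeas : ∀ h x, Measurable (F h x))
    (L_F L_r : NNReal)
    (hFLip : ∀ h, ∀ᵐ ξ ∂(μ h), LipschitzWith L_F (fun x : S × A => F h x ξ))
    (r : ℕ → S × A → ℝ) (hr : ∀ h, LipschitzWith L_r (r h))
    (Q : ℕ → S × A → ℝ) (V : ℕ → S → ℝ)
    (hterm : ∀ s, V (H + 1) s = 0)
    (hQ : ∀ h, 1 ≤ h → h ≤ H → ∀ x : S × A,
      Q h x = r h x + ∫ ξ, V (h + 1) (F h x ξ) ∂(μ h))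
    (hV : ∀ h, 1 ≤ h → h ≤ H → ∀ s : S, V h s = ⨆ a : A, Q h (s, a))
    (hVbdd : ∀ h s, BddAbove (Set.range fun a : A => Q h (s, a))) :
    ∀ h, 1 ≤ h → h ≤ H →
      (∀ x y : S × A,
        |Q h x - Q h y| ≤ (∑ h' ∈ Finset.Icc h H, (L_F : ℝ) ^ (h' - h) * L_r) * dist x y) ∧
      (∀ s s' : S,
        |V h s - V h s'| ≤ (∑ h' ∈ Finset.Icc h H, (L_F : ℝ) ^ (h' - h) * L_r) * dist s s') := by
  have csum_nonneg : ∀ h : ℕ, 0 ≤ ∑ h' ∈ Finset.Icc h H, (L_F : ℝ) ^ (h' - h) * L_r :=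
    fun h => Finset.sum_nonneg fun _ _ =>
      mul_nonneg (pow_nonneg L_F.coe_nonneg _) L_r.coe_nonneg
  -- step lemma for Q
  have qstep : ∀ (h : ℕ) (c : ℝ), 0 ≤ c → 1 ≤ h → h ≤ H →
      (∀ s s' : S, |V (h + 1) s - V (h + 1) s'| ≤ c * dist s s') →
      ∀ x y : S × A, |Q h x - Q h y| ≤ ((L_r : ℝ) + L_F * c) * dist x y := by
    intro h c hc h1 hH hVlip x y
    haveI := hμ h
    have Vcont : Continuous (V (h + 1)) := by
      have : LipschitzWith (Real.toNNReal c) (V (h + 1)) := by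
        apply LipschitzWith.of_dist_le_mul
        intro s s'
        rw [Real.dist_eq, Real.coe_toNNReal c hc]
        exact hVlip s s'
      exact this.continuous
    set g : S × A → Ξ → ℝ := fun x' ξ => V (h + 1) (F h x' ξ) with hg
    have gmeas : ∀ x', Measurable (g x') := fun x' =>
      Vcont.measurable.comp (hFmeas h x')
    have hbd : ∀ᵐ ξ ∂(μ h), |g x ξ - g y ξ| ≤ c * ((L_F : ℝ) * dist x y) := by
      filter_upwards [hFLip h] with ξ hξ
      calc |g x ξ - g y ξ| ≤ c * dist (F h x ξ) (F h y ξ) := hVlip _ _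
        _ ≤ c * ((L_F : ℝ) * dist x y) := by
            gcongr
            exact hξ.dist_le_mul x y
    have hint : Integrable (fun ξ => g x ξ - g y ξ) (μ h) := by
      refine ⟨((gmeas x).sub (gmeas y)).aestronglyMeasurable,
        HasFiniteIntegral.of_bounded (C := c * ((L_F : ℝ) * dist x y)) ?_⟩
      filter_upwards [hbd] with ξ hξ
      simpa [Real.norm_eq_abs] using hξ
    have hdiff : |(∫ ξ, g x ξ ∂(μ h)) - ∫ ξ, g y ξ ∂(μ h)| ≤ c * ((L_F : ℝ) * dist x y) := by
      by_cases hgx : Integrable (g x) (μ h)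
      · have hgy : Integrable (g y) (μ h) := by
          have h2 := hgx.sub hint
          have h3 : (g x - fun ξ => g x ξ - g y ξ) = g y := by
            funext ξ
            show g x ξ - (g x ξ - g y ξ) = g y ξ
            ring
          rwa [h3] at h2
        rw [← integral_sub hgx hgy]
        have := norm_integral_le_of_norm_le_const (μ := μ h)
          (f := fun ξ => g x ξ - g y ξ) (C := c * ((L_F : ℝ) * dist x y))
          (by filter_upwards [hbd] with ξ hξ; simpa [Real.norm_eq_abs] using hξ)
        simpa [Real.norm_eq_abs, measure_univ] using this
      · have hgy : ¬ Integrable (g y) (μ h) := by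
          intro hgy
          apply hgx
          have h2 := hgy.add hint
          have h3 : (g y + fun ξ => g x ξ - g y ξ) = g x := by
            funext ξ
            show g y ξ + (g x ξ - g y ξ) = g x ξ
            ring
          rwa [h3] at h2
        rw [integral_undef hgx, integral_undef hgy]
        simpa using mul_nonneg hc (mul_nonneg L_F.coe_nonneg dist_nonneg)
    rw [hQ h h1 hH x, hQ h h1 hH y]
    have hrr : |r h x - r h y| ≤ (L_r : ℝ) * dist x y := by
      have := (hr h).dist_le_mul x y
      rwa [Real.dist_eq] at this
    calc |r h x + (∫ ξ, g x ξ ∂(μ h)) - (r h y + ∫ ξ, g y ξ ∂(μ h))|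
        ≤ |r h x - r h y| + |(∫ ξ, g x ξ ∂(μ h)) - ∫ ξ, g y ξ ∂(μ h)| := by
          rw [show r h x + (∫ ξ, g x ξ ∂(μ h)) - (r h y + ∫ ξ, g y ξ ∂(μ h))
            = (r h x - r h y) + ((∫ ξ, g x ξ ∂(μ h)) - ∫ ξ, g y ξ ∂(μ h)) by ring]
          exact abs_add_le _ _
      _ ≤ (L_r : ℝ) * dist x y + c * ((L_F : ℝ) * dist x y) := add_le_add hrr hdiff
      _ = ((L_r : ℝ) + L_F * c) * dist x y := by ring
  -- step lemma for V
  have vstep : ∀ (h : ℕ) (c : ℝ), 1 ≤ h → h ≤ H →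
      (∀ x y : S × A, |Q h x - Q h y| ≤ c * dist x y) →
      ∀ s s' : S, |V h s - V h s'| ≤ c * dist s s' := by
    have one : ∀ (h : ℕ) (c : ℝ), 1 ≤ h → h ≤ H →
        (∀ x y : S × A, |Q h x - Q h y| ≤ c * dist x y) →
        ∀ s s' : S, V h s - V h s' ≤ c * dist s s' := by
      intro h c h1 hH hQl s s'
      rw [hV h h1 hH s, hV h h1 hH s', sub_le_iff_le_add]
      apply ciSup_le
      intro a
      have hd : dist ((s, a) : S × A) ((s', a) : S × A) = dist s s' := by
        rw [Prod.dist_eq]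
        simp [max_eq_left dist_nonneg]
      have h2 : Q h (s, a) - Q h (s', a) ≤ c * dist s s' := by
        have := hQl (s, a) (s', a)
        rw [hd] at this
        calc Q h (s, a) - Q h (s', a) ≤ |Q h (s, a) - Q h (s', a)| := le_abs_self _
          _ ≤ c * dist s s' := this
      have h3 : Q h (s', a) ≤ ⨆ a : A, Q h (s', a) := le_ciSup (hVbdd h s') a
      linarith
    intro h c h1 hH hQl s s'
    rw [abs_sub_le_iff]
    refine ⟨one h c h1 hH hQl s s', ?_⟩
    have := one h c h1 hH hQl s' s
    rwa [dist_comm] at this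
  -- main induction on k = H - h
  have main : ∀ k h, 1 ≤ h → h + k = H →
      (∀ x y : S × A,
        |Q h x - Q h y| ≤ (∑ h' ∈ Finset.Icc h H, (L_F : ℝ) ^ (h' - h) * L_r) * dist x y) ∧
      (∀ s s' : S,
        |V h s - V h s'| ≤ (∑ h' ∈ Finset.Icc h H, (L_F : ℝ) ^ (h' - h) * L_r) * dist s s') := by
    intro k
    induction k with
    | zero =>
      intro h h1 hk
      obtain rfl : H = h := by omega
      have hterm' : ∀ s s' : S, |V (H + 1) s - V (H + 1) s'| ≤ (0 : ℝ) * dist s s' := by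
        intro s s'
        simp [hterm]
      have hQl := qstep H 0 le_rfl h1 le_rfl hterm'
      have hsum : (∑ h' ∈ Finset.Icc H H, (L_F : ℝ) ^ (h' - H) * L_r)
          = (L_r : ℝ) + L_F * 0 := by
        simp [Finset.Icc_self]
      rw [hsum]
      exact ⟨hQl, vstep H _ h1 le_rfl hQl⟩
    | succ k ih =>
      intro h h1 hk
      have hH : h ≤ H := by omega
      have ih' := ih (h + 1) (by omega) (by omega)
      have hQl := qstep h _ (csum_nonneg (h + 1)) h1 hH ih'.2
      have hC : (∑ h' ∈ Finset.Icc h H, (L_F : ℝ) ^ (h' - h) * L_r)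
          = (L_r : ℝ) + L_F * ∑ h' ∈ Finset.Icc (h + 1) H, (L_F : ℝ) ^ (h' - (h + 1)) * L_r := by
        rw [← Finset.Ioc_insert_left hH, Finset.sum_insert (by simp), Finset.mul_sum]
        congr 1
        · simp
        · rw [← Finset.Icc_add_one_left_eq_Ioc]
          apply Finset.sum_congr rfl
          intro h' hh'
          have hmem := (Finset.mem_Icc.mp hh').1
          rw [show h' - h = (h' - (h + 1)) + 1 by omega, pow_succ']
          ring
      rw [hC]
      exact ⟨hQl, vstep h _ h1 hH (hC ▸ hQl)⟩
  intro h h1 hH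
  exact main (H - h) h h1 (by omega)
end

section
/- Let B be a ball in an adaptive partition with splitting rule: a ball B is split when √(d_max²/n(B)) ≤ diam(B), where n(B) counts visits to B and its parents. Then for any active ball B, the visit count satisfies (d_max/(2·diam(B)))² ≤ n(B) ≤ (d_max/diam(B))², assuming diam(child) = diam(parent)/2 in the hierarchical partition. -/
/-- For an active ball `B` of an adaptive partition with splitting rule
"split `B` when `√(d_max²/n(B)) ≤ diam(B)`", where the parent ball (of diameter
`2·diam(B)`) was split before `B` became active and counts are monotone, the visit
count satisfies `(d_max/(2·diam B))² ≤ n(B) ≤ (d_max/diam B)²`. -/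
theorem adaptive_partition_count_bounds
    (dmax diamB : ℝ) (nB nParent : ℕ)
    (hdmax : 0 < dmax) (hdiam : 0 < diamB) (hnP : 0 < nParent)
    -- the parent ball, of diameter `2 · diamB`, satisfied the splitting rule:
    (hParentSplit : Real.sqrt (dmax ^ 2 / nParent) ≤ 2 * diamB)
    -- the count of `B` includes the visits of its parents:
    (hMono : nParent ≤ nB)
    -- `B` is active, i.e. the splitting rule has not been triggered for `B`:
    (hActive : diamB ≤ Real.sqrt (dmax ^ 2 / nB)) :
    (dmax / (2 * diamB)) ^ 2 ≤ (nB : ℝ) ∧ (nB : ℝ) ≤ (dmax / diamB) ^ 2 := by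
  have hnB : 0 < nB := lt_of_lt_of_le hnP hMono
  have hnBR : (0:ℝ) < nB := by exact_mod_cast hnB
  have hnPR : (0:ℝ) < nParent := by exact_mod_cast hnP
  constructor
  · -- square hParentSplit
    have h1 : dmax ^ 2 / nParent ≤ (2 * diamB) ^ 2 := by
      have := Real.sqrt_le_sqrt (le_of_eq (rfl : dmax ^ 2 / nParent = _))
      nlinarith [Real.sq_sqrt (by positivity : (0:ℝ) ≤ dmax ^ 2 / (nParent:ℝ)),
        Real.sqrt_nonneg (dmax ^ 2 / (nParent:ℝ)), hParentSplit]
    have h2 : dmax ^ 2 / (2 * diamB) ^ 2 ≤ nParent := by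
      rw [div_le_iff₀ (by positivity)] at h1 ⊢
      nlinarith
    have : (nParent:ℝ) ≤ nB := by exact_mod_cast hMono
    calc (dmax / (2 * diamB)) ^ 2 = dmax ^ 2 / (2 * diamB) ^ 2 := by ring
      _ ≤ (nParent:ℝ) := h2
      _ ≤ (nB:ℝ) := this
  · have h1 : diamB ^ 2 ≤ dmax ^ 2 / nB := by
      nlinarith [Real.sq_sqrt (by positivity : (0:ℝ) ≤ dmax ^ 2 / (nB:ℝ)),
        Real.sqrt_nonneg (dmax ^ 2 / (nB:ℝ)), hActive]
    rw [div_pow, le_div_iff₀ (by positivity)]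
    rw [le_div_iff₀ hnBR] at h1
    nlinarith
end
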